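/- In the (ε, H)-smoothed game, for H > max{2, A·max_{i,j} v_{i,j}/ε}, once bidder i's total debt is nonnegative its utility is strictly decreasing in α_i: writing u_i(α) = −H ∑_j (p_{i,j} − v_{i,j}) x_{i,j} − (H − 2) ε α_i + A ∑_j v_{i,j} x_{i,j} + H ε^{1/2} on the region of nonnegative total debt, the term −(H−2)εα_i is strictly decreasing (H > 2), and for any good j newly acquired at multipliers above the minimum we have p_{i,j} ≥ v_{i,j} + ε, so the combined coefficient of x_{i,j}, namely −H(p_{i,j} − v_{i,j}) + A v_{i,j} ≤ −Hε + A v_{i,j} < 0, is negative, making u_i strictly decreasing in α_i on this region. -/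

import Mathlib

/-- Highest bid `b_j* = max_k α_k v_{k,j}` for good `j`. -/
noncomputable def bstar {n m : ℕ} [NeZero n] (v : Fin n → Fin m → ℝ)
    (α : Fin n → ℝ) (j : Fin m) : ℝ :=
  Finset.univ.sup' Finset.univ_nonempty fun k => α k * v k j

/-- The smoothed allocation of good `j` to bidder `i`. -/
noncomputable def xalloc {n m : ℕ} [NeZero n] (v : Fin n → Fin m → ℝ) (ε : ℝ)
    (α : Fin n → ℝ) (j : Fin m) (i : Fin n) : ℝ :=
  if bstar v α j - ε ≤ α i * v i j then
    (α i * v i j - (bstar v α j - ε)) /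
      ∑ k ∈ Finset.univ.filter fun k => bstar v α j - ε ≤ α k * v k j,
        (α k * v k j - (bstar v α j - ε))
  else 0

/-- `v_i* = min{v_{i,j} : v_{i,j} > 0}`. -/
noncomputable def vstar {n m : ℕ} (v : Fin n → Fin m → ℝ) (i : Fin n) : ℝ :=
  sInf {r | ∃ j, v i j = r ∧ 0 < r}

/-- `max_{k,j} v_{k,j}`. -/
noncomputable def vmax {n m : ℕ} [NeZero n] [NeZero m] (v : Fin n → Fin m → ℝ) : ℝ :=
  Finset.univ.sup' Finset.univ_nonempty fun q : Fin n × Fin m => v q.1 q.2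

/-- `p_{i,j}`: the highest bid on good `j` among bidders other than `i` (0 if none). -/
noncomputable def pbid {n m : ℕ} (v : Fin n → Fin m → ℝ)
    (α : Fin n → ℝ) (i : Fin n) (j : Fin m) : ℝ :=
  sSup (insert 0 {b | ∃ k, k ≠ i ∧ b = α k * v k j})

set_option linter.unusedSectionVars false
section helpers

variable {n m : ℕ} [NeZero n] [NeZero m]

lemma pbid_update (v : Fin n → Fin m → ℝ) (α : Fin n → ℝ) (i : Fin n) (t : ℝ) (j : Fin m) :
    pbid v (Function.update α i t) i j = pbid v α i j := by
  unfold pbid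
  congr 2
  ext b
  simp only [Set.mem_setOf_eq]
  constructor
  · rintro ⟨k, hk, rfl⟩; exact ⟨k, hk, by rw [Function.update_of_ne hk]⟩
  · rintro ⟨k, hk, rfl⟩; exact ⟨k, hk, by rw [Function.update_of_ne hk]⟩

lemma le_bstar (v : Fin n → Fin m → ℝ) (β : Fin n → ℝ) (j : Fin m) (k : Fin n) :
    β k * v k j ≤ bstar v β j :=
  Finset.le_sup' (fun k => β k * v k j) (Finset.mem_univ k)

lemma bstar_le {v : Fin n → Fin m → ℝ} {β : Fin n → ℝ} {j : Fin m} {c : ℝ}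
    (h : ∀ k, β k * v k j ≤ c) : bstar v β j ≤ c :=
  Finset.sup'_le _ _ fun k _ => h k

lemma xalloc_eq (v : Fin n → Fin m → ℝ) (ε : ℝ) (β : Fin n → ℝ) (j : Fin m) (i : Fin n) :
    xalloc v ε β j i =
      max 0 (β i * v i j - (bstar v β j - ε)) /
        ∑ k, max 0 (β k * v k j - (bstar v β j - ε)) := by
  unfold xalloc
  have hden : (∑ k ∈ Finset.univ.filter fun k => bstar v β j - ε ≤ β k * v k j,
      (β k * v k j - (bstar v β j - ε))) = ∑ k, max 0 (β k * v k j - (bstar v β j - ε)) := by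
    rw [Finset.sum_filter]
    refine Finset.sum_congr rfl fun k _ => ?_
    by_cases h : bstar v β j - ε ≤ β k * v k j
    · rw [if_pos h, max_eq_right (by linarith)]
    · rw [if_neg h, max_eq_left (by push_neg at h; linarith)]
  split_ifs with h
  · rw [hden, max_eq_right (by linarith)]
  · push_neg at h
    rw [max_eq_left (by linarith), zero_div]

lemma denom_pos (v : Fin n → Fin m → ℝ) {ε : ℝ} (hε : 0 < ε) (β : Fin n → ℝ) (j : Fin m) :
    0 < ∑ k, max 0 (β k * v k j - (bstar v β j - ε)) := by
  obtain ⟨k0, -, hk0⟩ := Finset.exists_mem_eq_sup' (Finset.univ_nonempty (α := Fin n))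
    (fun k => β k * v k j)
  have h1 : max 0 (β k0 * v k0 j - (bstar v β j - ε)) = ε := by
    rw [show bstar v β j = β k0 * v k0 j from hk0]
    rw [max_eq_right (by linarith)]; ring
  have h2 := Finset.single_le_sum
    (f := fun k => max 0 (β k * v k j - (bstar v β j - ε)))
    (fun k _ => le_max_left _ _) (Finset.mem_univ k0)
  rw [h1] at h2
  linarith

/-- monotonicity in own bid -/
lemma xalloc_mono (v : Fin n → Fin m → ℝ) {ε : ℝ} (hε : 0 < ε)
    (α : Fin n → ℝ) (i : Fin n) (j : Fin m) {t1 t2 : ℝ}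
    (hb : t1 * v i j ≤ t2 * v i j) :
    xalloc v ε (Function.update α i t1) j i ≤ xalloc v ε (Function.update α i t2) j i := by
  set β1 := Function.update α i t1 with hβ1
  set β2 := Function.update α i t2 with hβ2
  have hbk : ∀ k, k ≠ i → β1 k * v k j = β2 k * v k j := fun k hk => by
    rw [hβ1, hβ2, Function.update_of_ne hk, Function.update_of_ne hk]
  have hbi1 : β1 i * v i j = t1 * v i j := by rw [hβ1, Function.update_self]
  have hbi2 : β2 i * v i j = t2 * v i j := by rw [hβ2, Function.update_self]
  set M1 := bstar v β1 j with hM1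
  set M2 := bstar v β2 j with hM2
  have hle : ∀ k, β1 k * v k j ≤ β2 k * v k j := fun k => by
    rcases eq_or_ne k i with rfl | hk
    · rw [hbi1, hbi2]; exact hb
    · rw [hbk k hk]
  have hM : M1 ≤ M2 := by
    rw [hM1, hM2]
    exact bstar_le fun k => le_trans (hle k) (le_bstar v β2 j k)
  have hiM1 : β1 i * v i j ≤ M1 := by rw [hM1]; exact le_bstar v β1 j i
  have hiM2 : β2 i * v i j ≤ M2 := by rw [hM2]; exact le_bstar v β2 j i
  have key : β1 i * v i j - M1 ≤ β2 i * v i j - M2 := by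
    rcases le_total (β2 i * v i j) M1 with hc | hc
    · have h1 : M2 ≤ M1 := by
        rw [hM2]
        refine bstar_le fun k => ?_
        rcases eq_or_ne k i with rfl | hk
        · exact hc
        · rw [← hbk k hk]
          exact le_trans (le_bstar v β1 j k) (le_of_eq hM1.symm)
      have h2 : M2 = M1 := le_antisymm h1 hM
      have := hle i
      linarith
    · have h1 : M2 ≤ β2 i * v i j := by
        rw [hM2]
        refine bstar_le fun k => ?_
        rcases eq_or_ne k i with rfl | hk
        · exact le_rfl
        · rw [← hbk k hk]
          exact le_trans (le_trans (le_bstar v β1 j k) (le_of_eq hM1.symm)) hc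
      linarith
  rw [xalloc_eq, xalloc_eq, ← hM1, ← hM2]
  set N1 := max 0 (β1 i * v i j - (M1 - ε)) with hN1
  set N2 := max 0 (β2 i * v i j - (M2 - ε)) with hN2
  have hN : N1 ≤ N2 := max_le_max le_rfl (by linarith)
  have hNn1 : 0 ≤ N1 := le_max_left _ _
  have hNn2 : 0 ≤ N2 := le_max_left _ _
  set R1 := ∑ k ∈ Finset.univ.erase i, max 0 (β1 k * v k j - (M1 - ε)) with hR1
  set R2 := ∑ k ∈ Finset.univ.erase i, max 0 (β2 k * v k j - (M2 - ε)) with hR2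
  have hRn2 : 0 ≤ R2 := Finset.sum_nonneg fun k _ => le_max_left _ _
  have hR : R2 ≤ R1 := Finset.sum_le_sum fun k hk => by
    rw [← hbk k (Finset.ne_of_mem_erase hk)]
    exact max_le_max le_rfl (by linarith)
  have hD1 : (∑ k, max 0 (β1 k * v k j - (M1 - ε))) = N1 + R1 :=
    (Finset.add_sum_erase _ _ (Finset.mem_univ i)).symm
  have hD2 : (∑ k, max 0 (β2 k * v k j - (M2 - ε))) = N2 + R2 :=
    (Finset.add_sum_erase _ _ (Finset.mem_univ i)).symm
  have hDpos1 : 0 < N1 + R1 := by rw [← hD1]; exact denom_pos v hε β1 j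
  have hDpos2 : 0 < N2 + R2 := by rw [← hD2]; exact denom_pos v hε β2 j
  rw [hD1, hD2, div_le_div_iff₀ hDpos1 hDpos2]
  nlinarith

lemma vstar_pos_le {v : Fin n → Fin m → ℝ} {i : Fin n} {j : Fin m} (hvj : 0 < v i j) :
    0 < vstar v i ∧ vstar v i ≤ v i j := by
  have hsub : {r | ∃ j, v i j = r ∧ 0 < r} ⊆ Set.range (v i) := by
    rintro r ⟨j', rfl, -⟩; exact ⟨j', rfl⟩
  have hfin : {r | ∃ j, v i j = r ∧ 0 < r}.Finite :=
    Set.Finite.subset (Set.finite_range (v i)) hsub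
  have hne : {r | ∃ j, v i j = r ∧ 0 < r}.Nonempty := ⟨v i j, j, rfl, hvj⟩
  have hmem : vstar v i ∈ {r | ∃ j, v i j = r ∧ 0 < r} := hne.csInf_mem hfin
  obtain ⟨j', -, hpos⟩ := hmem
  exact ⟨hpos, csInf_le hfin.bddBelow ⟨j, rfl, hvj⟩⟩

lemma vstar_nonneg (v : Fin n → Fin m → ℝ) (i : Fin n) : 0 ≤ vstar v i := by
  apply Real.sInf_nonneg
  rintro r ⟨j', rfl, hpos⟩
  exact le_of_lt hpos

lemma bid_le_pbid {v : Fin n → Fin m → ℝ} {α : Fin n → ℝ} {i k : Fin n} (hk : k ≠ i)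
    (j : Fin m) : α k * v k j ≤ pbid v α i j := by
  apply le_csSup
  · apply Set.Finite.bddAbove
    apply Set.Finite.insert
    refine Set.Finite.subset (Set.finite_range fun k => α k * v k j) ?_
    rintro b ⟨k', -, rfl⟩; exact ⟨k', rfl⟩
  · exact Set.mem_insert_of_mem _ ⟨k, hk, rfl⟩

lemma xalloc_eq_one {v : Fin n → Fin m → ℝ} {ε : ℝ} (hε : 0 < ε) {α : Fin n → ℝ}
    {i : Fin n} {j : Fin m} (hvj : 0 < v i j) {t : ℝ}
    (ht : 1 + 2 * ε / vstar v i ≤ t)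
    (hp : pbid v α i j < v i j + ε) :
    xalloc v ε (Function.update α i t) j i = 1 := by
  set β := Function.update α i t with hβ
  obtain ⟨hvs, hvsle⟩ := vstar_pos_le (v := v) (i := i) (j := j) hvj
  have hbi : β i * v i j = t * v i j := by rw [hβ, Function.update_self]
  have htv : v i j + 2 * ε ≤ t * v i j := by
    have h1 : (1 + 2 * ε / vstar v i) * v i j ≤ t * v i j :=
      mul_le_mul_of_nonneg_right ht (le_of_lt hvj)
    have h2 : 2 * ε / vstar v i * vstar v i = 2 * ε :=
      div_mul_cancel₀ _ (ne_of_gt hvs)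
    have h3 : 2 * ε / vstar v i * vstar v i ≤ 2 * ε / vstar v i * v i j :=
      mul_le_mul_of_nonneg_left hvsle (by positivity)
    nlinarith
  have hother : ∀ k, k ≠ i → β k * v k j ≤ pbid v α i j := fun k hk => by
    rw [hβ, Function.update_of_ne hk]; exact bid_le_pbid hk j
  have hgap : ∀ k, k ≠ i → β k * v k j < β i * v i j - ε := fun k hk => by
    have := hother k hk
    rw [hbi]; linarith
  have hbst : bstar v β j = β i * v i j := by
    apply le_antisymm
    · refine bstar_le fun k => ?_
      rcases eq_or_ne k i with rfl | hk
      · exact le_rfl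
      · exact le_of_lt (lt_of_lt_of_le (hgap k hk) (by linarith))
    · exact le_bstar v β j i
  rw [xalloc_eq, hbst]
  have hnum : max 0 (β i * v i j - (β i * v i j - ε)) = ε := by
    rw [max_eq_right (by linarith)]; ring
  have hden : (∑ k, max 0 (β k * v k j - (β i * v i j - ε))) = ε := by
    rw [← Finset.add_sum_erase _ _ (Finset.mem_univ i), hnum]
    have : (∑ k ∈ Finset.univ.erase i, max 0 (β k * v k j - (β i * v i j - ε))) = 0 := by
      refine Finset.sum_eq_zero fun k hk => ?_
      have := hgap k (Finset.ne_of_mem_erase hk)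
      rw [max_eq_left (by linarith)]
    rw [this, add_zero]
  rw [hnum, hden, div_self (ne_of_gt hε)]

end helpers

/-- in the `(ε,H)`-smoothed game with `H > max{2, A·max_{i,j} v_{i,j}/ε}`,
once bidder `i`'s total debt is nonnegative its utility
`−H ∑_j (p_{i,j} − v_{i,j}) x_{i,j} − (H−2) ε α_i + A ∑_j v_{i,j} x_{i,j} + H ε^{1/2}`
is strictly decreasing in its own multiplier `α_i`. -/
theorem stmt18 {n m : ℕ} [NeZero n] [NeZero m] (v : Fin n → Fin m → ℝ)
    (hv : ∀ i j, 0 ≤ v i j) (ε A H : ℝ) (hε : 0 < ε)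
    (hH : max 2 (A * vmax v / ε) < H)
    (i : Fin n) (α : Fin n → ℝ)
    (hα : ∀ k, 1 + 2 * ε / vstar v k ≤ α k ∧ α k ≤ A) :
    StrictAntiOn
      (fun t =>
        -H * ∑ j, (pbid v (Function.update α i t) i j - v i j) *
            xalloc v ε (Function.update α i t) j i
          - (H - 2) * ε * t
          + A * ∑ j, v i j * xalloc v ε (Function.update α i t) j i
          + H * Real.sqrt ε)
      {t | t ∈ Set.Icc (1 + 2 * ε / vstar v i) A ∧
        0 ≤ ∑ j, (pbid v (Function.update α i t) i j - v i j) *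
              xalloc v ε (Function.update α i t) j i
            + t * ε - Real.sqrt ε} := by
  have hH2 : 2 < H := lt_of_le_of_lt (le_max_left _ _) hH
  have hHv : A * vmax v / ε < H := lt_of_le_of_lt (le_max_right _ _) hH
  have hA1 : 1 ≤ A := by
    have h1 := (hα i).1
    have h2 := (hα i).2
    have h3 : 0 ≤ 2 * ε / vstar v i := by
      apply div_nonneg (by linarith) (vstar_nonneg v i)
    linarith
  intro t1 ht1 t2 ht2 h12
  simp only [Set.mem_setOf_eq, Set.mem_Icc] at ht1 ht2
  obtain ⟨⟨ht1l, ht1r⟩, -⟩ := ht1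
  obtain ⟨⟨ht2l, ht2r⟩, -⟩ := ht2
  set X : ℝ → Fin m → ℝ := fun t j => xalloc v ε (Function.update α i t) j i with hX
  set c : Fin m → ℝ := fun j => A * v i j - H * (pbid v α i j - v i j) with hc
  have key : ∀ j, c j * X t2 j ≤ c j * X t1 j := by
    intro j
    rcases eq_or_lt_of_le (hv i j) with h0 | h0
    · -- v i j = 0 : allocations are equal
      have hXeq : X t1 j = X t2 j := by
        apply le_antisymm
        · exact xalloc_mono v hε α i j (by rw [← h0]; simp)
        · exact xalloc_mono v hε α i j (by rw [← h0]; simp)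
      rw [hXeq]
    · rcases lt_or_ge (pbid v α i j) (v i j + ε) with hp | hp
      · -- fully won at both multipliers
        have h1 : X t1 j = 1 := xalloc_eq_one hε h0 ht1l hp
        have h2 : X t2 j = 1 := xalloc_eq_one hε h0 ht2l hp
        rw [h1, h2]
      · -- coefficient nonpositive, allocation nondecreasing
        have hvm : v i j ≤ vmax v :=
          Finset.le_sup' (fun q : Fin n × Fin m => v q.1 q.2) (Finset.mem_univ (i, j))
        have hcn : c j ≤ 0 := by
          have hAv : A * v i j ≤ A * vmax v :=
            mul_le_mul_of_nonneg_left hvm (by linarith)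
          have hHε : A * vmax v < H * ε := by
            have := (div_lt_iff₀ hε).mp hHv
            linarith
          have hHp : H * ε ≤ H * (pbid v α i j - v i j) :=
            mul_le_mul_of_nonneg_left (by linarith) (by linarith)
          rw [hc]
          dsimp only
          linarith
        have hXle : X t1 j ≤ X t2 j :=
          xalloc_mono v hε α i j (mul_le_mul_of_nonneg_right (le_of_lt h12) (hv i j))
        exact mul_le_mul_of_nonpos_left hXle hcn
  have hsum : (∑ j, c j * X t2 j) ≤ ∑ j, c j * X t1 j :=
    Finset.sum_le_sum fun j _ => key j
  have hrw : ∀ t, -H * (∑ j, (pbid v (Function.update α i t) i j - v i j) * X t j)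
      + A * ∑ j, v i j * X t j = ∑ j, c j * X t j := by
    intro t
    rw [Finset.mul_sum, Finset.mul_sum, ← Finset.sum_add_distrib]
    refine Finset.sum_congr rfl fun j _ => ?_
    rw [pbid_update, hc]
    ring
  have e1 := hrw t1
  have e2 := hrw t2
  dsimp only
  rw [hX] at e1 e2
  dsimp only at e1 e2
  have hlin : (H - 2) * ε * t1 < (H - 2) * ε * t2 := by
    exact mul_lt_mul_of_pos_left h12 (mul_pos (by linarith) hε)
  linarith
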